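/- arXiv:2509.05009 — 5 statements merged into one kernel-verified Lean document; each statement's English description precedes it below -/
import Mathlib

section
/- Let F be a field in which z^d + 1 splits into linear factors. If a homogeneous degree-d polynomial f ∈ F[x_1,...,x_n] can be written as e_d(L_1,...,L_m) for linear forms L_1,...,L_m, and q is a linear form, then f + q^d can be written as e_d(L_1',...,L_{m'}') for some linear forms L_1',...,L_{m'}' (namely, by appending -ω_1·q,...,-ω_d·q where ω_i are the roots of z^d+1). -/
open Finset

def esymmVal {R : Type*} [CommSemiring R] {n : ℕ} (k : ℕ) (a : Fin n → R) : R :=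
  ∑ S ∈ Finset.powersetCard k (Finset.univ : Finset (Fin n)), ∏ i ∈ S, a i

theorem stmt5 {F : Type*} [Field F] (n d : ℕ) (hd : 1 ≤ d) (ω : Fin d → F)
    (hω : (Polynomial.X ^ d + 1 : Polynomial F) = ∏ i, (Polynomial.X - Polynomial.C (ω i)))
    (f : MvPolynomial (Fin n) F) (hf : f.IsHomogeneous d)
    (m : ℕ) (L : Fin m → MvPolynomial (Fin n) F) (hL : ∀ i, (L i).IsHomogeneous 1)
    (hfe : f = esymmVal d L)
    (q : MvPolynomial (Fin n) F) (hq : q.IsHomogeneous 1) :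
    ∃ (m' : ℕ) (L' : Fin m' → MvPolynomial (Fin n) F),
      (∀ i, (L' i).IsHomogeneous 1) ∧ f + q ^ d = esymmVal d L' := by
  classical
  set M : Fin d → MvPolynomial (Fin n) F := fun i => MvPolynomial.C (-(ω i)) * q with hM
  refine ⟨m + d, Fin.append L M, ?_, ?_⟩
  · intro i
    refine Fin.addCases (fun i => ?_) (fun i => ?_) i
    · rw [Fin.append_left]; exact hL i
    · rw [Fin.append_right]; exact hq.C_mul _
  -- Vieta for tuples
  have key : ∀ (N : ℕ) (a : Fin N → MvPolynomial (Fin n) F) (k : ℕ), k ≤ N →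
      (∏ i, (Polynomial.X + Polynomial.C (a i))).coeff k = esymmVal (N - k) a := by
    intro N a k hk
    rw [Finset.prod_X_add_C_coeff _ _ (by simpa using hk)]
    simp [esymmVal]
  -- elementary symmetric values of -ω in F
  have hE : ∀ j, j ≤ d →
      (∑ t ∈ Finset.powersetCard j (Finset.univ : Finset (Fin d)), ∏ i ∈ t, (-(ω i)))
        = if j = 0 ∨ j = d then 1 else 0 := by
    intro j hj
    have hω' : (Polynomial.X ^ d + 1 : Polynomial F)
        = ∏ i, (Polynomial.X + Polynomial.C (-(ω i))) := by
      rw [hω]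
      refine Finset.prod_congr rfl fun i _ => ?_
      rw [map_neg, sub_eq_add_neg]
    have hc := Finset.prod_X_add_C_coeff (Finset.univ : Finset (Fin d))
      (fun i => -(ω i)) (k := d - j) (by simp)
    rw [← hω'] at hc
    have hcard : #(Finset.univ : Finset (Fin d)) - (d - j) = j := by simp; omega
    rw [hcard] at hc
    rw [← hc, Polynomial.coeff_add, Polynomial.coeff_X_pow, Polynomial.coeff_one]
    rcases eq_or_ne j 0 with h0 | h0
    · subst h0; simp; omega
    · rcases eq_or_ne j d with hjd | hjd
      · subst hjd; simp; omega
      · have h1 : d - j ≠ d := by omega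
        have h2 : d - j ≠ 0 := by omega
        simp [h1, h2, h0, hjd]
  -- the product of the new factors
  have hQ : (∏ i : Fin d, (Polynomial.X + Polynomial.C (M i)))
      = Polynomial.X ^ d + Polynomial.C (q ^ d) := by
    apply Polynomial.ext
    intro k
    by_cases hk : k ≤ d
    · rw [Finset.prod_X_add_C_coeff _ _ (by simpa using hk)]
      have hcard : #(Finset.univ : Finset (Fin d)) - k = d - k := by simp
      rw [hcard]
      have step : ∀ t ∈ Finset.powersetCard (d - k) (Finset.univ : Finset (Fin d)),
          ∏ i ∈ t, M i = MvPolynomial.C (∏ i ∈ t, (-(ω i))) * q ^ (d - k) := by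
        intro t ht
        rw [Finset.mem_powersetCard] at ht
        rw [hM]
        rw [Finset.prod_mul_distrib, Finset.prod_const, ht.2, map_prod]
      rw [Finset.sum_congr rfl step, ← Finset.sum_mul, ← map_sum,
        hE (d - k) (by omega)]
      rw [Polynomial.coeff_add, Polynomial.coeff_X_pow, Polynomial.coeff_C]
      rcases eq_or_ne k d with hkd | hkd
      · rw [hkd, Nat.sub_self, if_pos (Or.inl rfl), map_one, pow_zero, mul_one,
          if_pos rfl, if_neg (by omega : ¬ (d = 0)), add_zero]
      · rcases eq_or_ne k 0 with hk0 | hk0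
        · subst hk0
          have h0 : ¬ ((0:ℕ) = d) := by omega
          simp [h0]
        · have h1 : ¬ (d - k = 0) := by omega
          have h2 : ¬ (d - k = d) := by omega
          simp [h1, h2, hkd, hk0]
    · push_neg at hk
      have hdeg : (∏ i : Fin d, (Polynomial.X + Polynomial.C (M i))).natDegree < k := by
        refine lt_of_le_of_lt (le_trans (Polynomial.natDegree_prod_le _ _) ?_) hk
        refine le_trans (Finset.sum_le_card_nsmul _ _ 1 fun i _ =>
          (Polynomial.natDegree_X_add_C _).le) ?_
        rw [Finset.card_univ, Fintype.card_fin, smul_eq_mul, mul_one]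
      rw [Polynomial.coeff_eq_zero_of_natDegree_lt hdeg,
        Polynomial.coeff_add, Polynomial.coeff_X_pow, Polynomial.coeff_C]
      have h3 : ¬ (k = d) := by omega
      have h4 : ¬ (k = 0) := by omega
      rw [if_neg h3, if_neg h4, add_zero]
  -- split the big product
  have split : (∏ i : Fin (m + d), (Polynomial.X + Polynomial.C (Fin.append L M i)))
      = (∏ i : Fin m, (Polynomial.X + Polynomial.C (L i)))
        * (Polynomial.X ^ d + Polynomial.C (q ^ d)) := by
    rw [Fin.prod_univ_add, ← hQ]
    congr 1
    · exact Finset.prod_congr rfl fun i _ => by rw [Fin.append_left]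
    · exact Finset.prod_congr rfl fun i _ => by rw [Fin.append_right]
  have lhs : esymmVal d (Fin.append L M)
      = (∏ i : Fin (m + d), (Polynomial.X + Polynomial.C (Fin.append L M i))).coeff m := by
    have h := key (m + d) (Fin.append L M) m (by omega)
    rw [show m + d - m = d by omega] at h
    exact h.symm
  have h1 : (∏ i : Fin m, (Polynomial.X + Polynomial.C (L i))).coeff m = 1 := by
    have h := key m L m le_rfl
    rw [Nat.sub_self] at h
    rw [h]
    simp [esymmVal]
  rw [lhs, split, mul_add, Polynomial.coeff_add, Polynomial.coeff_mul_X_pow',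
    Polynomial.coeff_mul_C, h1, one_mul]
  by_cases hdm : d ≤ m
  · rw [if_pos hdm]
    have h2 := key m L (m - d) (by omega)
    rw [show m - (m - d) = d by omega] at h2
    rw [h2, hfe]
  · rw [if_neg hdm]
    have hf0 : f = 0 := by
      rw [hfe, esymmVal, Finset.powersetCard_eq_empty.2 (by simp; omega),
        Finset.sum_empty]
    simp [hf0]
end

section
/- Let F be a field of characteristic 2 containing a primitive 3rd root of unity. For every homogeneous degree-2 polynomial f ∈ F[x_1,...,x_n], there exist linear forms L_1,...,L_m ∈ F[x_1,...,x_n] such that e_2(L_1,...,L_m) = f and e_1(L_1,...,L_m) = 0. -/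
open Finset

section Esymm

variable {R : Type*} [CommSemiring R] {ι : Type*} [DecidableEq ι]

/-- Elementary symmetric function over a finset of indices. -/
def myE (k : ℕ) (s : Finset ι) (a : ι → R) : R :=
  ∑ t ∈ s.powersetCard k, ∏ i ∈ t, a i

lemma myE_zero (s : Finset ι) (a : ι → R) : myE 0 s a = 1 := by
  simp [myE]

lemma myE_empty (k : ℕ) (a : ι → R) : myE (k + 1) (∅ : Finset ι) a = 0 := by
  unfold myE
  rw [Finset.powersetCard_eq_empty.mpr (by simp), Finset.sum_empty]

lemma myE_insert {x : ι} {s : Finset ι} (hx : x ∉ s) (k : ℕ) (a : ι → R) :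
    myE (k + 1) (insert x s) a = myE (k + 1) s a + a x * myE k s a := by
  have hdisj : Disjoint (s.powersetCard (k + 1)) ((s.powersetCard k).image (insert x)) := by
    rw [Finset.disjoint_right]
    intro t ht ht'
    obtain ⟨u, _, rfl⟩ := Finset.mem_image.mp ht
    exact hx ((Finset.mem_powersetCard.mp ht').1 (Finset.mem_insert_self x u))
  have hinj : ∀ t ∈ s.powersetCard k, ∀ u ∈ s.powersetCard k,
      insert x t = insert x u → t = u := by
    intro t ht u hu h
    have hxt : x ∉ t := fun h' => hx ((Finset.mem_powersetCard.mp ht).1 h')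
    have hxu : x ∉ u := fun h' => hx ((Finset.mem_powersetCard.mp hu).1 h')
    rw [← Finset.erase_insert hxt, h, Finset.erase_insert hxu]
  unfold myE
  rw [Finset.powersetCard_succ_insert hx, Finset.sum_union hdisj, Finset.sum_image hinj,
    Finset.mul_sum]
  congr 1
  refine Finset.sum_congr rfl fun t ht => ?_
  have hxt : x ∉ t := fun h' => hx ((Finset.mem_powersetCard.mp ht).1 h')
  rw [Finset.prod_insert hxt]

lemma myE_singleton_one (x : ι) (a : ι → R) : myE 1 ({x} : Finset ι) a = a x := by
  rw [show ({x} : Finset ι) = insert x ∅ from rfl, myE_insert (Finset.notMem_empty x),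
    myE_empty, myE_zero]
  ring

lemma myE_singleton_two (x : ι) (a : ι → R) : myE 2 ({x} : Finset ι) a = 0 := by
  rw [show ({x} : Finset ι) = insert x ∅ from rfl, myE_insert (Finset.notMem_empty x),
    myE_empty, myE_empty]
  ring

lemma myE_one_union {s t : Finset ι} (h : Disjoint s t) (a : ι → R) :
    myE 1 (s ∪ t) a = myE 1 s a + myE 1 t a := by
  classical
  induction s using Finset.induction_on with
  | empty => simp [myE_empty]
  | @insert x s hx ih =>
    have hxt : x ∉ t := fun h' => (Finset.disjoint_left.mp h (Finset.mem_insert_self x s)) h'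
    have h' : Disjoint s t := h.mono_left (Finset.subset_insert x s)
    have hxst : x ∉ s ∪ t := by simp [hx, hxt]
    rw [Finset.insert_union, myE_insert hxst 0 a, myE_insert hx 0 a, ih h', myE_zero, myE_zero]
    ring

lemma myE_two_union {s t : Finset ι} (h : Disjoint s t) (a : ι → R) :
    myE 2 (s ∪ t) a = myE 2 s a + myE 2 t a + myE 1 s a * myE 1 t a := by
  classical
  induction s using Finset.induction_on with
  | empty => simp [myE_empty]
  | @insert x s hx ih =>
    have hxt : x ∉ t := fun h' => (Finset.disjoint_left.mp h (Finset.mem_insert_self x s)) h'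
    have h' : Disjoint s t := h.mono_left (Finset.subset_insert x s)
    have hxst : x ∉ s ∪ t := by simp [hx, hxt]
    rw [Finset.insert_union, myE_insert hxst 1 a, ih h', myE_one_union h' a,
      myE_insert hx 1 a, myE_insert hx 0 a, myE_zero]
    ring

lemma myE_map {κ : Type*} [DecidableEq κ] (e : ι ↪ κ) (k : ℕ) (s : Finset ι) (a : κ → R) :
    myE k (s.map e) a = myE k s (a ∘ e) := by
  unfold myE
  rw [Finset.powersetCard_map, Finset.sum_map]
  refine Finset.sum_congr rfl fun t _ => ?_
  rw [show (Finset.mapEmbedding e).toEmbedding t = t.map e from rfl, Finset.prod_map]; rfl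

lemma esymmVal_eq_myE {n : ℕ} (k : ℕ) (a : Fin n → R) :
    esymmVal k a = myE k Finset.univ a := rfl

lemma esymmVal_fin_zero (k : ℕ) (a : Fin 0 → R) : esymmVal (k + 1) a = 0 := by
  rw [esymmVal_eq_myE, Finset.univ_eq_empty, myE_empty]

section Append

variable {m m' : ℕ} (L : Fin m → R) (M : Fin m' → R)

private lemma append_setup :
    ((Finset.univ : Finset (Fin m)).map (Fin.castAddEmb m') ∪
      (Finset.univ : Finset (Fin m')).map (Fin.natAddEmb m) = Finset.univ) ∧
    Disjoint ((Finset.univ : Finset (Fin m)).map (Fin.castAddEmb m'))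
      ((Finset.univ : Finset (Fin m')).map (Fin.natAddEmb m)) := by
  constructor
  · ext i
    simp only [Finset.mem_union, Finset.mem_map, Finset.mem_univ, true_and, iff_true]
    refine Fin.addCases (fun j => Or.inl ⟨j, rfl⟩) (fun j => Or.inr ⟨j, rfl⟩) i
  · rw [Finset.disjoint_left]
    rintro i hi hi'
    obtain ⟨j, -, rfl⟩ := Finset.mem_map.mp hi
    obtain ⟨j', -, hj'⟩ := Finset.mem_map.mp hi'
    have h1 : (Fin.natAddEmb m j' : Fin (m + m')).val = m + j'.val := rfl
    have h2 : ((Fin.castAddEmb m' j : Fin (m + m'))).val = j.val := rfl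
    have := congrArg Fin.val hj'
    rw [h1, h2] at this
    omega

private lemma append_comp_left : (Fin.append L M) ∘ (Fin.castAddEmb m') = L := by
  funext j
  exact Fin.append_left L M j

private lemma append_comp_right : (Fin.append L M) ∘ (Fin.natAddEmb m) = M := by
  funext j
  exact Fin.append_right L M j

lemma esymmVal_one_append :
    esymmVal 1 (Fin.append L M) = esymmVal 1 L + esymmVal 1 M := by
  obtain ⟨hu, hd⟩ := append_setup (m := m) (m' := m')
  rw [esymmVal_eq_myE, ← hu, myE_one_union hd, myE_map, myE_map,
    append_comp_left, append_comp_right, esymmVal_eq_myE, esymmVal_eq_myE]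

lemma esymmVal_two_append :
    esymmVal 2 (Fin.append L M) =
      esymmVal 2 L + esymmVal 2 M + esymmVal 1 L * esymmVal 1 M := by
  obtain ⟨hu, hd⟩ := append_setup (m := m) (m' := m')
  rw [esymmVal_eq_myE, ← hu, myE_two_union hd, myE_map, myE_map, myE_map, myE_map,
    append_comp_left, append_comp_right]
  rfl

end Append

lemma esymmVal_one_fin_two (a : Fin 2 → R) : esymmVal 1 a = a 0 + a 1 := by
  rw [esymmVal_eq_myE, show (Finset.univ : Finset (Fin 2)) = insert 0 {1} from by decide,
    myE_insert (by decide) 0 a, myE_singleton_one, myE_zero]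
  ring

lemma esymmVal_two_fin_two (a : Fin 2 → R) : esymmVal 2 a = a 0 * a 1 := by
  rw [esymmVal_eq_myE, show (Finset.univ : Finset (Fin 2)) = insert 0 {1} from by decide,
    myE_insert (by decide) 1 a, myE_singleton_two, myE_singleton_one]
  ring

lemma esymmVal_one_fin_three (a : Fin 3 → R) : esymmVal 1 a = a 0 + a 1 + a 2 := by
  rw [esymmVal_eq_myE, show (Finset.univ : Finset (Fin 3)) = insert 0 (insert 1 {2}) from by decide,
    myE_insert (by decide) 0 a, myE_insert (by decide) 0 a, myE_singleton_one, myE_zero, myE_zero]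
  ring

lemma esymmVal_two_fin_three (a : Fin 3 → R) :
    esymmVal 2 a = a 0 * a 1 + a 0 * a 2 + a 1 * a 2 := by
  rw [esymmVal_eq_myE, show (Finset.univ : Finset (Fin 3)) = insert 0 (insert 1 {2}) from by decide,
    myE_insert (by decide) 1 a, myE_insert (by decide) 1 a, myE_singleton_two,
    myE_singleton_one, myE_insert (by decide) 0 a, myE_singleton_one, myE_zero]
  ring

end Esymm

section MyRep

variable {F : Type*} [Field F] {n : ℕ}

/-- MyRepresentability predicate. -/
def MyRep (f : MvPolynomial (Fin n) F) : Prop :=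
  ∃ (m : ℕ) (L : Fin m → MvPolynomial (Fin n) F),
    (∀ i, (L i).IsHomogeneous 1) ∧ esymmVal 2 L = f ∧ esymmVal 1 L = 0

lemma rep_zero : MyRep (0 : MvPolynomial (Fin n) F) :=
  ⟨0, Fin.elim0, fun i => i.elim0, esymmVal_fin_zero 1 _, esymmVal_fin_zero 0 _⟩

lemma rep_add {f g : MvPolynomial (Fin n) F} (hf : MyRep f) (hg : MyRep g) : MyRep (f + g) := by
  obtain ⟨m, L, hL1, hL2, hL3⟩ := hf
  obtain ⟨m', M, hM1, hM2, hM3⟩ := hg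
  refine ⟨m + m', Fin.append L M, ?_, ?_, ?_⟩
  · intro i
    refine Fin.addCases (motive := fun i => (Fin.append L M i).IsHomogeneous 1) ?_ ?_ i
    · intro j; rw [Fin.append_left]; exact hL1 j
    · intro j; rw [Fin.append_right]; exact hM1 j
  · rw [esymmVal_two_append, hL2, hM2, hL3, hM3]; ring
  · rw [esymmVal_one_append, hL3, hM3]; ring

variable (h2 : (2 : MvPolynomial (Fin n) F) = 0)

include h2 in
lemma rep_sq {A : MvPolynomial (Fin n) F} (hA : A.IsHomogeneous 1) : MyRep (A * A) := by
  refine ⟨2, ![A, A], ?_, ?_, ?_⟩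
  · intro i; fin_cases i <;> exact hA
  · rw [esymmVal_two_fin_two]; rfl
  · rw [esymmVal_one_fin_two]
    show A + A = 0
    linear_combination A * h2

include h2 in
lemma rep_triple {A B : MvPolynomial (Fin n) F} (hA : A.IsHomogeneous 1)
    (hB : B.IsHomogeneous 1) : MyRep (A * B + A * A + B * B) := by
  refine ⟨3, ![A, B, A + B], ?_, ?_, ?_⟩
  · intro i; fin_cases i
    · exact hA
    · exact hB
    · exact hA.add hB
  · rw [esymmVal_two_fin_three]
    show A * B + A * (A + B) + B * (A + B) = A * B + A * A + B * B
    linear_combination (A * B) * h2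
  · rw [esymmVal_one_fin_three]
    show A + B + (A + B) = 0
    linear_combination (A + B) * h2

include h2 in
lemma rep_mul_XX (c : F) (i j : Fin n) :
    MyRep (MvPolynomial.C c * (MvPolynomial.X i * MvPolynomial.X j) : MvPolynomial (Fin n) F) := by
  set A : MvPolynomial (Fin n) F := MvPolynomial.C c * MvPolynomial.X i with hAdef
  set B : MvPolynomial (Fin n) F := MvPolynomial.X j with hBdef
  have hA : A.IsHomogeneous 1 := by
    have := (MvPolynomial.isHomogeneous_C (Fin n) c).mul (MvPolynomial.isHomogeneous_X F i)
    simpa using this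
  have hB : B.IsHomogeneous 1 := MvPolynomial.isHomogeneous_X F j
  have h1 : MyRep (A * B + A * A + B * B) := rep_triple h2 hA hB
  have h2' : MyRep (A * A) := rep_sq h2 hA
  have h3 : MyRep (B * B) := rep_sq h2 hB
  have key : (A * B + A * A + B * B) + A * A + B * B
      = MvPolynomial.C c * (MvPolynomial.X i * MvPolynomial.X j) := by
    rw [hAdef, hBdef]
    linear_combination ((MvPolynomial.C c * MvPolynomial.X i) ^ 2
      + (MvPolynomial.X j : MvPolynomial (Fin n) F) ^ 2) * h2
  rw [← key]
  exact rep_add (rep_add h1 h2') h3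

end MyRep

lemma degree_split {n : ℕ} {d : Fin n →₀ ℕ} {k : ℕ} (hd : d.degree = k + 1) :
    ∃ (i : Fin n) (d' : Fin n →₀ ℕ), d = Finsupp.single i 1 + d' ∧ d'.degree = k := by
  have hne : d ≠ 0 := by
    intro h
    rw [h, map_zero] at hd
    omega
  obtain ⟨i, hi⟩ := Finsupp.support_nonempty_iff.mpr hne
  have hi1 : 1 ≤ d i := Nat.one_le_iff_ne_zero.mpr (Finsupp.mem_support_iff.mp hi)
  have hle : Finsupp.single i 1 ≤ d := Finsupp.single_le_iff.mpr hi1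
  refine ⟨i, d - Finsupp.single i 1, (add_tsub_cancel_of_le hle).symm, ?_⟩
  have hdeg : d.degree = (Finsupp.single i 1).degree + (d - Finsupp.single i 1).degree := by
    conv_lhs => rw [← add_tsub_cancel_of_le hle]
    simp only [Finsupp.degree_eq_weight_one, map_add]
  have hsingle : (Finsupp.single i 1).degree = 1 := by
    exact Finsupp.degree_single i 1
  rw [hd, hsingle] at hdeg
  omega

lemma degree_two_decomp {n : ℕ} {d : Fin n →₀ ℕ} (hd : d.degree = 2) :
    ∃ (i j : Fin n), d = Finsupp.single i 1 + Finsupp.single j 1 := by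
  obtain ⟨i, d', rfl, hd'⟩ := degree_split (k := 1) hd
  obtain ⟨j, d'', rfl, hd''⟩ := degree_split (k := 0) hd'
  have : d'' = 0 := (Finsupp.degree_eq_zero_iff d'').mp hd''
  exact ⟨i, j, by rw [this, add_zero]⟩

theorem stmt7 {F : Type*} [Field F] [CharP F 2] (ω : F) (hω : ω ^ 2 + ω + 1 = 0)
    (n : ℕ) (f : MvPolynomial (Fin n) F) (hf : f.IsHomogeneous 2) :
    ∃ (m : ℕ) (L : Fin m → MvPolynomial (Fin n) F),
      (∀ i, (L i).IsHomogeneous 1) ∧ esymmVal 2 L = f ∧ esymmVal 1 L = 0 := by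
  have h2 : (2 : MvPolynomial (Fin n) F) = 0 := by
    have := CharP.cast_eq_zero (MvPolynomial (Fin n) F) 2
    exact_mod_cast this
  have : MyRep f := by
    rw [← f.support_sum_monomial_coeff]
    refine Finset.sum_induction _ MyRep (fun _ _ => rep_add) rep_zero ?_
    intro d hd
    have hcoeff : MvPolynomial.coeff d f ≠ 0 := MvPolynomial.mem_support_iff.mp hd
    have hdeg : d.degree = 2 := by
      have := hf hcoeff
      rw [Finsupp.degree_eq_weight_one]
      exact this
    obtain ⟨i, j, rfl⟩ := degree_two_decomp hdeg
    have : (MvPolynomial.monomial (Finsupp.single i 1 + Finsupp.single j 1)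
        (MvPolynomial.coeff (Finsupp.single i 1 + Finsupp.single j 1) f))
        = MvPolynomial.C (MvPolynomial.coeff (Finsupp.single i 1 + Finsupp.single j 1) f)
          * (MvPolynomial.X i * MvPolynomial.X j) := by
      rw [MvPolynomial.monomial_single_add, MvPolynomial.monomial_eq,
        Finsupp.prod_single_index (by rw [pow_zero])]
      ring
    rw [this]
    exact rep_mul_XX h2 _ i j
  exact this
end

section
/- Over a field F of characteristic 2, the polynomial f = x_1x_2x_3 + x_4x_5x_6 cannot be written as g + q_1^3 + ... + q_k^3 where g is a product of a homogeneous linear polynomial and a homogeneous quadratic polynomial, and q_1,...,q_k are linear forms in F[x_1,...,x_6]. -/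
open MvPolynomial

section aux
variable {σ R : Type*} [CommSemiring R]

lemma pd_zero {p : MvPolynomial σ R} (h : p.IsHomogeneous 0) (i : σ) :
    pderiv i p = 0 := by
  classical
  conv_lhs => rw [p.as_sum]
  rw [map_sum]
  apply Finset.sum_eq_zero
  intro d hd
  have hd0 : d = 0 := by
    have h1 := h (mem_support_iff.mp hd)
    rw [show (1 : σ → ℕ) = fun _ => 1 from rfl, ← Finsupp.degree_eq_weight_one] at h1
    exact (Finsupp.degree_eq_zero_iff d).mp h1
  subst hd0
  rw [pderiv_monomial]
  simp

lemma pd_succ {p : MvPolynomial σ R} {n : ℕ} (h : p.IsHomogeneous (n + 1)) (i : σ) :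
    (pderiv i p).IsHomogeneous n := by
  classical
  conv_lhs => rw [p.as_sum]
  rw [map_sum]
  apply IsHomogeneous.sum
  intro d hd
  rw [pderiv_monomial]
  by_cases hdi : d i = 0
  · rw [hdi]
    simp only [Nat.cast_zero, mul_zero, monomial_zero]
    exact isHomogeneous_zero _ _ _
  · apply isHomogeneous_monomial
    have hle : Finsupp.single i 1 ≤ d := by
      rwa [Finsupp.single_le_iff, Nat.one_le_iff_ne_zero]
    have hsum : (d - Finsupp.single i 1) + Finsupp.single i 1 = d :=
      tsub_add_cancel_of_le hle
    have hdeg : d.degree = n + 1 := by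
      have h1 := h (mem_support_iff.mp hd)
      rwa [show (1 : σ → ℕ) = fun _ => 1 from rfl, ← Finsupp.degree_eq_weight_one] at h1
    have h2 : (d - Finsupp.single i 1).degree + (Finsupp.single i 1).degree = n + 1 := by
      rw [Finsupp.degree_eq_weight_one] at hdeg ⊢
      rw [← map_add, hsum, hdeg]
    have h3 : (Finsupp.single i 1).degree = 1 := by
      exact Finsupp.degree_single i 1
    omega

end aux

theorem stmt12 {F : Type*} [Field F] [CharP F 2] :
    ¬ ∃ (g₁ g₂ : MvPolynomial (Fin 6) F) (k : ℕ) (q : Fin k → MvPolynomial (Fin 6) F),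
        g₁.IsHomogeneous 1 ∧ g₂.IsHomogeneous 2 ∧ (∀ i, (q i).IsHomogeneous 1) ∧
        (X 0 * X 1 * X 2 + X 3 * X 4 * X 5 : MvPolynomial (Fin 6) F)
          = g₁ * g₂ + ∑ i, (q i) ^ 3 := by
  rintro ⟨g₁, g₂, k, q, h₁, h₂, hq, heq⟩
  have h2F : (2 : F) = 0 := by exact_mod_cast CharP.cast_eq_zero F 2
  have h2 : (2 : MvPolynomial (Fin 6) F) = 0 := by
    rw [← map_ofNat (C : F →+* MvPolynomial (Fin 6) F) 2, h2F, map_zero]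
  have hg1 : ∀ j k : Fin 6, pderiv j (pderiv k g₁) = 0 :=
    fun j k => pd_zero (pd_succ h₁ k) j
  have hg2 : ∀ i j k : Fin 6, pderiv i (pderiv j (pderiv k g₂)) = 0 :=
    fun i j k => pd_zero (pd_succ (pd_succ h₂ k) j) i
  have hq2 : ∀ (l : Fin k) (j k' : Fin 6), pderiv j (pderiv k' ((q l) ^ 3)) = 0 := by
    intro l j k'
    have hq1 : pderiv j (pderiv k' (q l)) = 0 := pd_zero (pd_succ (hq l) k') j
    have e : (q l) ^ 3 = q l * (q l * q l) := by ring
    rw [e]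
    simp only [pderiv_mul, hq1, map_add, zero_mul, mul_zero, zero_add, add_zero]
    linear_combination (3 * q l * pderiv j (q l) * pderiv k' (q l)) * h2
  have E : ∀ i j k' : Fin 6,
      pderiv i (pderiv j (pderiv k'
        (X 0 * X 1 * X 2 + X 3 * X 4 * X 5 : MvPolynomial (Fin 6) F)))
        = pderiv k' g₁ * pderiv i (pderiv j g₂) + pderiv j g₁ * pderiv i (pderiv k' g₂)
          + pderiv i g₁ * pderiv j (pderiv k' g₂) := by
    intro i j k'
    rw [heq]
    have hs : pderiv i (pderiv j (pderiv k' (∑ l, (q l) ^ 3))) = 0 := by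
      rw [map_sum, map_sum, map_sum]
      apply Finset.sum_eq_zero
      intro l _
      rw [hq2 l j k', map_zero]
    rw [map_add, map_add, map_add, hs, add_zero]
    simp only [pderiv_mul, map_add, hg1, hg2, zero_mul, mul_zero, zero_add, add_zero]
    ring
  set A : Fin 6 → MvPolynomial (Fin 6) F := fun i => pderiv i g₁ with hA
  set B : Fin 6 → Fin 6 → MvPolynomial (Fin 6) F :=
    fun i j => pderiv i (pderiv j g₂) with hB
  have hf : ∀ i j k' : Fin 6,
      pderiv i (pderiv j (pderiv k'
        (X 0 * X 1 * X 2 + X 3 * X 4 * X 5 : MvPolynomial (Fin 6) F)))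
      = A k' * B i j + A j * B i k' + A i * B j k' := E
  have e012 : A 2 * B 0 1 + A 1 * B 0 2 + A 0 * B 1 2 = 1 := by
    rw [← hf 0 1 2]
    simp [pderiv_mul, pderiv_X_self, pderiv_X_of_ne]
  have e345 : A 5 * B 3 4 + A 4 * B 3 5 + A 3 * B 4 5 = 1 := by
    rw [← hf 3 4 5]
    simp [pderiv_mul, pderiv_X_self, pderiv_X_of_ne]
  have e013 : A 3 * B 0 1 + A 1 * B 0 3 + A 0 * B 1 3 = 0 := by
    rw [← hf 0 1 3]
    simp [pderiv_mul, pderiv_X_self, pderiv_X_of_ne]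
  have e023 : A 3 * B 0 2 + A 2 * B 0 3 + A 0 * B 2 3 = 0 := by
    rw [← hf 0 2 3]
    simp [pderiv_mul, pderiv_X_self, pderiv_X_of_ne]
  have e123 : A 3 * B 1 2 + A 2 * B 1 3 + A 1 * B 2 3 = 0 := by
    rw [← hf 1 2 3]
    simp [pderiv_mul, pderiv_X_self, pderiv_X_of_ne]
  have e014 : A 4 * B 0 1 + A 1 * B 0 4 + A 0 * B 1 4 = 0 := by
    rw [← hf 0 1 4]
    simp [pderiv_mul, pderiv_X_self, pderiv_X_of_ne]
  have e024 : A 4 * B 0 2 + A 2 * B 0 4 + A 0 * B 2 4 = 0 := by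
    rw [← hf 0 2 4]
    simp [pderiv_mul, pderiv_X_self, pderiv_X_of_ne]
  have e124 : A 4 * B 1 2 + A 2 * B 1 4 + A 1 * B 2 4 = 0 := by
    rw [← hf 1 2 4]
    simp [pderiv_mul, pderiv_X_self, pderiv_X_of_ne]
  have e015 : A 5 * B 0 1 + A 1 * B 0 5 + A 0 * B 1 5 = 0 := by
    rw [← hf 0 1 5]
    simp [pderiv_mul, pderiv_X_self, pderiv_X_of_ne]
  have e025 : A 5 * B 0 2 + A 2 * B 0 5 + A 0 * B 2 5 = 0 := by
    rw [← hf 0 2 5]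
    simp [pderiv_mul, pderiv_X_self, pderiv_X_of_ne]
  have e125 : A 5 * B 1 2 + A 2 * B 1 5 + A 1 * B 2 5 = 0 := by
    rw [← hf 1 2 5]
    simp [pderiv_mul, pderiv_X_self, pderiv_X_of_ne]
  have hA3 : A 3 = 0 := by
    linear_combination A 2 * e013 + A 1 * e023 + A 0 * e123 - A 3 * e012
      - (A 1 * A 2 * B 0 3 + A 0 * A 2 * B 1 3 + A 0 * A 1 * B 2 3) * h2
  have hA4 : A 4 = 0 := by
    linear_combination A 2 * e014 + A 1 * e024 + A 0 * e124 - A 4 * e012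
      - (A 1 * A 2 * B 0 4 + A 0 * A 2 * B 1 4 + A 0 * A 1 * B 2 4) * h2
  have hA5 : A 5 = 0 := by
    linear_combination A 2 * e015 + A 1 * e025 + A 0 * e125 - A 5 * e012
      - (A 1 * A 2 * B 0 5 + A 0 * A 2 * B 1 5 + A 0 * A 1 * B 2 5) * h2
  have : (1 : MvPolynomial (Fin 6) F) = 0 := by
    rw [← e345, hA3, hA4, hA5]; ring
  exact one_ne_zero this
end

section
/- Over any field F and for 1 ≤ d ≤ n, every point a ∈ F^n in the order-2 zero set V_2(e_d) of the degree-d elementary symmetric polynomial has at most d-1 distinct coordinate values; that is, |{a_1,...,a_n}| ≤ d - 1 for all a ∈ V_2(e_d). -/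
open MvPolynomial Finset

section aux
variable {σ : Type*} [DecidableEq σ] {F : Type*} [CommRing F]

/-- Sum of products of values of `a` over the `k`-element subsets of `s`. -/
def Esum (a : σ → F) (s : Finset σ) (k : ℕ) : F :=
  ∑ t ∈ Finset.powersetCard k s, ∏ i ∈ t, a i

lemma Esum_zero (a : σ → F) (s : Finset σ) : Esum a s 0 = 1 := by simp [Esum]

lemma Esum_insert (a : σ → F) {s : Finset σ} {j : σ} (hj : j ∉ s) (k : ℕ) :
    Esum a (insert j s) (k + 1) = Esum a s (k + 1) + a j * Esum a s k := by
  rw [Esum, powersetCard_succ_insert hj, sum_union, sum_image]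
  · congr 1
    rw [Esum, mul_sum]
    refine sum_congr rfl fun t ht => ?_
    rw [prod_insert fun h => hj ((mem_powersetCard.1 ht).1 h)]
  · intro t ht u hu htu
    have ht' := (mem_powersetCard.1 ht).1
    have hu' := (mem_powersetCard.1 hu).1
    have : ∀ v : Finset σ, v ⊆ s → (insert j v).erase j = v := fun v hv => by
      rw [erase_insert fun h => hj (hv h)]
    rw [← this t ht', ← this u hu', htu]
  · rw [disjoint_right]
    rintro t ht hts
    obtain ⟨u, hu, rfl⟩ := mem_image.1 ht
    exact hj ((mem_powersetCard.1 hts).1 (mem_insert_self j u))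

lemma pderiv_prod_X (i : σ) (t : Finset σ) :
    pderiv i (∏ j ∈ t, (X j : MvPolynomial σ F)) =
      if i ∈ t then ∏ j ∈ t.erase i, X j else 0 := by
  induction t using Finset.induction_on with
  | empty => simp
  | @insert x s hx' ih =>
    rw [prod_insert hx', Derivation.leibniz, ih]
    by_cases hix : i = x
    · subst hix
      simp [hx', erase_insert hx', pderiv_X_self]
    · rw [pderiv_X_of_ne (Ne.symm hix)]
      by_cases his : i ∈ s
      · simp only [his, if_pos (mem_insert_of_mem his), smul_eq_mul, smul_zero, zero_mul,
          mul_zero, add_zero, if_true]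
        rw [erase_insert_of_ne (Ne.symm hix), prod_insert (fun h => hx' (mem_of_mem_erase h))]
      · simp [his, hix, mem_insert]

lemma eval_pderiv_esymm [Fintype σ] (a : σ → F) (i : σ) (d : ℕ) :
    eval a (pderiv i (esymm σ F (d + 1))) = Esum a (univ.erase i) d := by
  rw [esymm, map_sum, map_sum]
  simp_rw [pderiv_prod_X, apply_ite (eval a), eval_prod, eval_X, map_zero]
  rw [← Finset.sum_filter, Esum]
  refine Finset.sum_bij' (fun t _ => t.erase i) (fun s _ => insert i s) ?_ ?_ ?_ ?_ ?_
  · intro t ht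
    rw [mem_filter, mem_powersetCard] at ht
    rw [mem_powersetCard]
    refine ⟨fun x hx => mem_erase.2 ⟨(mem_erase.1 hx).1, mem_univ _⟩, ?_⟩
    rw [card_erase_of_mem ht.2, ht.1.2]
    rfl
  · intro s hs
    rw [mem_powersetCard] at hs
    have his : i ∉ s := fun h => (mem_erase.1 (hs.1 h)).1 rfl
    rw [mem_filter, mem_powersetCard]
    exact ⟨⟨fun x _ => mem_univ x, by rw [card_insert_of_notMem his, hs.2]⟩,
      mem_insert_self i s⟩
  · intro t ht
    rw [mem_filter] at ht
    exact insert_erase ht.2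
  · intro s hs
    rw [mem_powersetCard] at hs
    exact erase_insert fun h => (mem_erase.1 (hs.1 h)).1 rfl
  · intro t ht
    rfl
end aux

theorem stmt16 {F : Type*} [Field F] [DecidableEq F] (n d : ℕ) (hd : 1 ≤ d) (hdn : d ≤ n)
    (a : Fin n → F) (h0 : eval a (esymm (Fin n) F d) = 0)
    (h1 : ∀ i : Fin n, eval a (pderiv i (esymm (Fin n) F d)) = 0) :
    (Finset.univ.image a).card ≤ d - 1 := by
  classical
  -- key claim
  have key : ∀ t : ℕ, 1 ≤ t → t ≤ d → ∀ T : Finset (Fin n), T.card = t →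
      Set.InjOn a ↑T → Esum a (univ \ T) (d - t) = 0 := by
    intro t
    induction t with
    | zero => omega
    | succ t ih =>
      intro _ htd T hT hinj
      rcases Nat.eq_zero_or_pos t with rfl | ht1
      · -- base case : card T = 1
        obtain ⟨i, rfl⟩ := card_eq_one.1 hT
        have hi := h1 i
        obtain ⟨e, rfl⟩ : ∃ e, d = e + 1 := ⟨d - 1, by omega⟩
        rw [eval_pderiv_esymm] at hi
        rw [Finset.sdiff_singleton_eq_erase]
        simpa using hi
      · -- inductive step : card T = t + 1 ≥ 2
        obtain ⟨j, hj, j', hj', hjj'⟩ := Finset.one_lt_card.1 (by omega : 1 < T.card)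
        have hstep : ∀ k : Fin n, k ∈ T →
            Esum a (univ \ T) (d - (t + 1) + 1) + a k * Esum a (univ \ T) (d - (t + 1)) = 0 := by
          intro k hk
          have hsd : univ \ T.erase k = insert k (univ \ T) := by
            ext x
            simp only [mem_sdiff, mem_univ, true_and, mem_erase, mem_insert, not_and, not_not]
            by_cases hx : x = k <;> simp [hx, hk]
          have hk' : k ∉ univ \ T := by simp [hk]
          have hd' : d - t = d - (t + 1) + 1 := by omega
          have hE := ih ht1 (by omega) (T.erase k)
            (by rw [card_erase_of_mem hk, hT]; rfl)
            (hinj.mono (by exact_mod_cast Finset.erase_subset _ _))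
          rw [hsd, hd', Esum_insert a hk'] at hE
          exact hE
        have hEj := hstep j hj
        have hEj' := hstep j' hj'
        have hsub : (a j - a j') * Esum a (univ \ T) (d - (t + 1)) = 0 := by
          linear_combination hEj - hEj'
        have hne : a j - a j' ≠ 0 := sub_ne_zero.2 fun h =>
          hjj' (hinj (by exact_mod_cast hj) (by exact_mod_cast hj') h)
        exact (mul_eq_zero.1 hsub).resolve_left hne
  -- conclude
  by_contra hcon
  push_neg at hcon
  have hdc : d ≤ (univ.image a).card := by omega
  obtain ⟨B, hBsub, hBcard⟩ := Finset.exists_subset_card_eq hdc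
  have hch : ∀ v ∈ B, ∃ i : Fin n, a i = v := by
    intro v hv
    obtain ⟨i, _, hi⟩ := mem_image.1 (hBsub hv)
    exact ⟨i, hi⟩
  set f : {v // v ∈ B} → Fin n := fun v => (hch v.1 v.2).choose with hf
  have hfa : ∀ v : {v // v ∈ B}, a (f v) = v.1 := fun v => (hch v.1 v.2).choose_spec
  have hfinj : Function.Injective f := fun v w h => by
    apply Subtype.ext
    rw [← hfa v, ← hfa w, h]
  set T := B.attach.image f with hT
  have hTcard : T.card = d := by
    rw [hT, card_image_of_injective _ hfinj, card_attach, hBcard]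
  have hTinj : Set.InjOn a ↑T := by
    intro x hx y hy hxy
    obtain ⟨v, _, rfl⟩ := mem_image.1 (by exact_mod_cast hx)
    obtain ⟨w, _, rfl⟩ := mem_image.1 (by exact_mod_cast hy)
    rw [hfa v, hfa w] at hxy
    exact congrArg f (Subtype.ext hxy)
  have := key d hd le_rfl T hTcard hTinj
  rw [Nat.sub_self, Esum_zero] at this
  exact one_ne_zero this
end

section
/- Let F be a field with char F = 0 or with n - d + 1 not divisible by char F, and let 2 ≤ d ≤ n. If a ∈ F^n satisfies e_d(a) = 0 and ∂e_d/∂x_i(a) = 0 for all i, then e_{d-1}(a) = 0, and moreover for every i with a_i ≠ 0, ∂e_{d-1}/∂x_i(a) = 0. -/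
open MvPolynomial

open Finset in
private lemma pd_prod_not_mem {σ R : Type*} [DecidableEq σ] [CommRing R]
    (i : σ) (s : Finset σ) (h : i ∉ s) :
    pderiv i (∏ j ∈ s, X j : MvPolynomial σ R) = 0 := by
  induction s using Finset.induction_on with
  | empty => simp
  | @insert j s hj ih =>
    simp only [Finset.mem_insert, not_or] at h
    rw [Finset.prod_insert hj, pderiv_mul, pderiv_X_of_ne (Ne.symm h.1), ih h.2]
    ring

open Finset in
private lemma pd_prod_mem {σ R : Type*} [DecidableEq σ] [CommRing R]
    (i : σ) (s : Finset σ) (h : i ∈ s) :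
    pderiv i (∏ j ∈ s, X j : MvPolynomial σ R) = ∏ j ∈ s.erase i, X j := by
  rw [← Finset.mul_prod_erase s _ h, pderiv_mul, pderiv_X_self,
    pd_prod_not_mem i _ (Finset.notMem_erase i s), one_mul, mul_zero, add_zero]

open Finset in
private lemma pderiv_esymm_succ {σ R : Type*} [Fintype σ] [DecidableEq σ] [CommRing R]
    (i : σ) (k : ℕ) :
    pderiv i (esymm σ R (k + 1)) =
      ∑ t ∈ powersetCard k ((univ : Finset σ).erase i), ∏ j ∈ t, X j := by
  have huniv : (univ : Finset σ) = insert i ((univ : Finset σ).erase i) := by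
    simp
  conv_lhs => rw [esymm, huniv, powersetCard_succ_insert (Finset.notMem_erase i _)]
  rw [Finset.sum_union]
  · rw [map_add, map_sum, Finset.sum_image]
    · have h1 : ∀ t ∈ powersetCard (k + 1) ((univ : Finset σ).erase i),
          pderiv i (∏ j ∈ t, X j : MvPolynomial σ R) = 0 := by
        intro t ht
        rw [mem_powersetCard] at ht
        exact pd_prod_not_mem i t fun hi => (Finset.notMem_erase i _) (ht.1 hi)
      rw [map_sum, Finset.sum_eq_zero h1, zero_add]
      refine Finset.sum_congr rfl fun t ht => ?_
      rw [mem_powersetCard, subset_erase] at ht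
      rw [pd_prod_mem i _ (Finset.mem_insert_self i t), Finset.erase_insert ht.1.2]
    · intro s hs t ht hst
      rw [Finset.mem_coe, mem_powersetCard, subset_erase] at hs ht
      have := congrArg (Finset.erase · i) hst
      simpa [Finset.erase_insert hs.1.2, Finset.erase_insert ht.1.2] using this
  · rw [Finset.disjoint_right]
    intro t ht ht'
    rw [Finset.mem_image] at ht
    obtain ⟨s, hs, rfl⟩ := ht
    rw [mem_powersetCard, subset_erase] at ht'
    exact ht'.1.2 (Finset.mem_insert_self i s)

open Finset in
private lemma esymm_succ_split {σ R : Type*} [Fintype σ] [DecidableEq σ] [CommRing R]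
    (i : σ) (k : ℕ) :
    esymm σ R (k + 1) =
      (∑ t ∈ powersetCard (k + 1) ((univ : Finset σ).erase i), ∏ j ∈ t, X j) +
        X i * ∑ t ∈ powersetCard k ((univ : Finset σ).erase i), ∏ j ∈ t, X j := by
  have huniv : (univ : Finset σ) = insert i ((univ : Finset σ).erase i) := by
    simp
  conv_lhs => rw [esymm, huniv, powersetCard_succ_insert (Finset.notMem_erase i _)]
  rw [Finset.sum_union]
  · congr 1
    rw [Finset.sum_image]
    · rw [Finset.mul_sum]
      refine Finset.sum_congr rfl fun t ht => ?_
      rw [mem_powersetCard, subset_erase] at ht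
      rw [Finset.prod_insert ht.1.2]
    · intro s hs t ht hst
      rw [Finset.mem_coe, mem_powersetCard, subset_erase] at hs ht
      have := congrArg (Finset.erase · i) hst
      simpa [Finset.erase_insert hs.1.2, Finset.erase_insert ht.1.2] using this
  · rw [Finset.disjoint_right]
    intro t ht ht'
    rw [Finset.mem_image] at ht
    obtain ⟨s, hs, rfl⟩ := ht
    rw [mem_powersetCard, subset_erase] at ht'
    exact ht'.1.2 (Finset.mem_insert_self i s)

/-- Key identity: `e_{k+1} = ∂e_{k+2}/∂x_i + x_i ⬝ ∂e_{k+1}/∂x_i`. -/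
private lemma esymm_eq_pderiv_add {σ R : Type*} [Fintype σ] [DecidableEq σ] [CommRing R]
    (i : σ) (k : ℕ) :
    esymm σ R (k + 1) =
      pderiv i (esymm σ R (k + 2)) + X i * pderiv i (esymm σ R (k + 1)) := by
  rw [pderiv_esymm_succ, pderiv_esymm_succ, esymm_succ_split]

open Finset in
private lemma sum_pderiv_esymm {σ R : Type*} [Fintype σ] [DecidableEq σ] [CommRing R] (k : ℕ) :
    ∑ i : σ, pderiv i (esymm σ R (k + 1)) = (Fintype.card σ - k) • esymm σ R k := by
  have hfilt : ∀ i : σ, powersetCard k ((univ : Finset σ).erase i) =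
      (powersetCard k (univ : Finset σ)).filter (fun t => i ∉ t) := by
    intro i
    ext t
    simp only [mem_powersetCard, subset_erase, Finset.mem_filter, Finset.subset_univ,
      true_and]
    tauto
  simp_rw [pderiv_esymm_succ, hfilt, Finset.sum_filter]
  rw [Finset.sum_comm, esymm, Finset.smul_sum]
  refine Finset.sum_congr rfl fun t ht => ?_
  rw [Finset.sum_ite, Finset.sum_const, Finset.sum_const_zero, add_zero]
  rw [mem_powersetCard] at ht
  congr 1
  rw [Finset.filter_not, Finset.card_sdiff_of_subset (Finset.filter_subset _ _), Finset.card_univ]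
  congr 1
  rw [← ht.2]
  exact congrArg Finset.card (Finset.filter_univ_mem t)

theorem stmt17 {F : Type*} [Field F] (n d : ℕ) (hd : 2 ≤ d) (hdn : d ≤ n)
    (hchar : ((n - d + 1 : ℕ) : F) ≠ 0)
    (a : Fin n → F) (h0 : eval a (esymm (Fin n) F d) = 0)
    (h1 : ∀ i : Fin n, eval a (pderiv i (esymm (Fin n) F d)) = 0) :
    eval a (esymm (Fin n) F (d - 1)) = 0 ∧
      ∀ i : Fin n, a i ≠ 0 → eval a (pderiv i (esymm (Fin n) F (d - 1))) = 0 := by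
  obtain ⟨k, rfl⟩ : ∃ k, d = k + 2 := ⟨d - 2, by omega⟩
  have hd1 : k + 2 - 1 = k + 1 := rfl
  rw [hd1]
  have hsum := congrArg (eval a) (sum_pderiv_esymm (σ := Fin n) (R := F) (k + 1))
  rw [map_sum] at hsum
  simp only [h1, Finset.sum_const_zero] at hsum
  have hcard : Fintype.card (Fin n) - (k + 1) = n - (k + 2) + 1 := by
    rw [Fintype.card_fin]; omega
  rw [hcard, nsmul_eq_mul, map_mul, map_natCast] at hsum
  have he : eval a (esymm (Fin n) F (k + 1)) = 0 := by
    rcases mul_eq_zero.mp hsum.symm with h | h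
    · exact absurd h hchar
    · exact h
  refine ⟨he, fun i hi => ?_⟩
  have hid := congrArg (eval a) (esymm_eq_pderiv_add (σ := Fin n) (R := F) i k)
  rw [he, map_add, map_mul, eval_X, h1 i, zero_add] at hid
  exact (mul_eq_zero.mp hid.symm).resolve_left hi
end
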